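/- For every real α > 2 and every K > 0, the improper integral ∫₀^∞ r (1 − exp(−K r^{-α})) dr converges and equals (K^{2/α}/2) · Γ(1 − 2/α), where Γ denotes the real Gamma function. -/

import Mathlib

set_option maxHeartbeats 1000000


open MeasureTheory Real Set

lemma one_sub_exp_neg_le (t : ℝ) : 1 - Real.exp (-t) ≤ t := by
  have := Real.add_one_le_exp (-t)
  linarith

lemma one_sub_exp_neg_nonneg {t : ℝ} (ht : 0 ≤ t) : 0 ≤ 1 - Real.exp (-t) := by
  have : Real.exp (-t) ≤ 1 := Real.exp_le_one_iff.mpr (by linarith)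
  linarith

/-- For `α > 2` and `K > 0`, `∫₀^∞ r (1 − exp(−K r^{-α})) dr` converges and equals
`(K^{2/α}/2) · Γ(1 − 2/α)`. -/
theorem integral_radial_laplace (α K : ℝ) (hα : 2 < α) (hK : 0 < K) :
    IntegrableOn (fun r : ℝ => r * (1 - Real.exp (-K * r ^ (-α)))) (Ioi 0) ∧
    ∫ r in Ioi (0 : ℝ), r * (1 - Real.exp (-K * r ^ (-α)))
      = K ^ (2 / α) / 2 * Real.Gamma (1 - 2 / α) := by
  have hα0 : (0:ℝ) < α := by linarith
  set f : ℝ → ℝ := fun r => r * (1 - Real.exp (-K * r ^ (-α))) with hf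
  -- basic positivity facts
  have harg : ∀ x : ℝ, 0 < x → 0 ≤ K * x ^ (-α) := fun x hx =>
    le_of_lt (mul_pos hK (rpow_pos_of_pos hx _))
  have hu_nonneg : ∀ x : ℝ, 0 < x → 0 ≤ 1 - Real.exp (-K * x ^ (-α)) := by
    intro x hx
    have := one_sub_exp_neg_nonneg (harg x hx)
    simpa [neg_mul] using this
  have hu_le : ∀ x : ℝ, 0 < x → 1 - Real.exp (-K * x ^ (-α)) ≤ K * x ^ (-α) := by
    intro x hx
    have := one_sub_exp_neg_le (K * x ^ (-α))
    simpa [neg_mul] using this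
  have hu_le_one : ∀ x : ℝ, 0 < x → 1 - Real.exp (-K * x ^ (-α)) ≤ 1 := by
    intro x hx
    have : 0 ≤ Real.exp (-K * x ^ (-α)) := (Real.exp_pos _).le
    linarith
  -- continuity of f on Ioi 0
  have hcont : ContinuousOn f (Ioi 0) := by
    intro x hx
    have hx0 : x ≠ 0 := ne_of_gt hx
    have h1 : ContinuousAt (fun r : ℝ => r ^ (-α)) x :=
      Real.continuousAt_rpow_const x (-α) (Or.inl hx0)
    have h2 : ContinuousAt (fun r : ℝ => Real.exp (-K * r ^ (-α))) x :=
      (Real.continuous_exp.continuousAt).comp ((continuousAt_const.mul h1))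
    exact (continuousAt_id.mul (continuousAt_const.sub h2)).continuousWithinAt
  have hmeas : AEStronglyMeasurable f (volume.restrict (Ioi (0:ℝ))) :=
    hcont.aestronglyMeasurable measurableSet_Ioi
  -- Step 1: integrability of f on Ioi 0
  have hInt : IntegrableOn f (Ioi 0) := by
    have h01 : IntegrableOn f (Ioc 0 1) := by
      refine Integrable.mono' (integrable_const 1)
        (hmeas.mono_set Ioc_subset_Ioi_self) ?_
      rw [ae_restrict_iff' measurableSet_Ioc]
      refine Filter.Eventually.of_forall (fun x hx => ?_)
      obtain ⟨hx0, hx1⟩ := hx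
      have h1 := hu_nonneg x hx0
      have h2 := hu_le_one x hx0
      rw [Real.norm_eq_abs, abs_of_nonneg (mul_nonneg hx0.le h1)]
      calc x * (1 - Real.exp (-K * x ^ (-α))) ≤ x * 1 := by
            exact mul_le_mul_of_nonneg_left h2 hx0.le
        _ ≤ 1 := by linarith
    have h1i : IntegrableOn f (Ioi 1) := by
      refine Integrable.mono'
        ((integrableOn_Ioi_rpow_of_lt (by linarith : 1 - α < -1) zero_lt_one).const_mul K)
        (hmeas.mono_set (Ioi_subset_Ioi zero_le_one)) ?_
      rw [ae_restrict_iff' measurableSet_Ioi]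
      refine Filter.Eventually.of_forall (fun x hx => ?_)
      have hx0 : (0:ℝ) < x := lt_trans zero_lt_one hx
      have h1 := hu_nonneg x hx0
      rw [Real.norm_eq_abs, abs_of_nonneg (mul_nonneg hx0.le h1)]
      calc x * (1 - Real.exp (-K * x ^ (-α))) ≤ x * (K * x ^ (-α)) :=
            mul_le_mul_of_nonneg_left (hu_le x hx0) hx0.le
        _ = K * x ^ (1 - α) := by
            rw [show (1 - α) = 1 + (-α) by ring, Real.rpow_add hx0, Real.rpow_one]
            ring
    have : Ioc (0:ℝ) 1 ∪ Ioi 1 = Ioi 0 := Ioc_union_Ioi_eq_Ioi zero_le_one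
    rw [← this]
    exact h01.union h1i
  refine ⟨hInt, ?_⟩
  -- Step 2: integration by parts
  set u : ℝ → ℝ := fun r => 1 - Real.exp (-K * r ^ (-α)) with hu_def
  set u' : ℝ → ℝ := fun r => -(K * α * r ^ (-α - 1) * Real.exp (-K * r ^ (-α))) with hu'_def
  set v : ℝ → ℝ := fun r => r ^ 2 / 2 with hv_def
  set v' : ℝ → ℝ := fun r => r with hv'_def
  have hu : ∀ x ∈ Ioi (0:ℝ), HasDerivAt u (u' x) x := by
    intro x hx
    have hx0 : x ≠ 0 := ne_of_gt hx
    have h1 : HasDerivAt (fun r : ℝ => r ^ (-α)) (-α * x ^ (-α - 1)) x :=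
      Real.hasDerivAt_rpow_const (Or.inl hx0)
    have h2 : HasDerivAt (fun r : ℝ => -K * r ^ (-α)) (-K * (-α * x ^ (-α - 1))) x :=
      h1.const_mul (-K)
    have h3 := h2.exp
    have h4 := (hasDerivAt_const x (1:ℝ)).sub h3
    exact h4.congr_deriv (by simp only [hu'_def]; ring)
  have hv : ∀ x ∈ Ioi (0:ℝ), HasDerivAt v (v' x) x := by
    intro x _
    have := (hasDerivAt_pow 2 x).div_const 2
    exact this.congr_deriv (by simp [hv'_def])
  have huv' : IntegrableOn (u * v') (Ioi 0) := by
    refine hInt.congr_fun (fun x _ => ?_) measurableSet_Ioi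
    simp [hf, hu_def, hv'_def, mul_comm]
  -- integrability of the Gamma-type integrand and substitution
  have hg : IntegrableOn (fun y : ℝ => y ^ (-(2/α)) * Real.exp (-K * y)) (Ioi 0) := by
    have := integrableOn_rpow_mul_exp_neg_mul_rpow
      (show (-1:ℝ) < -(2/α) by
        rw [neg_lt_neg_iff]
        rw [div_lt_one hα0]; linarith)
      zero_lt_one hK
    simpa [Real.rpow_one] using this
  have hsub : IntegrableOn
      (fun x : ℝ => x ^ ((-α) - 1) • ((x ^ (-α)) ^ (-(2/α)) * Real.exp (-K * x ^ (-α))))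
      (Ioi 0) :=
    (integrableOn_Ioi_comp_rpow_iff' (fun y : ℝ => y ^ (-(2/α)) * Real.exp (-K * y))
      (by linarith : -α ≠ 0)).mpr hg
  have hsub_eq : ∀ x : ℝ, x ∈ Ioi (0:ℝ) →
      x ^ ((-α) - 1) • ((x ^ (-α)) ^ (-(2/α)) * Real.exp (-K * x ^ (-α)))
        = x ^ (1 - α) * Real.exp (-K * x ^ (-α)) := by
    intro x hx
    have hx0 : (0:ℝ) < x := hx
    have h2 : (x ^ (-α)) ^ (-(2/α)) = x ^ (2:ℝ) := by
      rw [← Real.rpow_mul hx0.le]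
      congr 1
      field_simp
    rw [smul_eq_mul, h2, ← mul_assoc, ← Real.rpow_add hx0]
    congr 2
    ring
  have hsub' : IntegrableOn (fun x : ℝ => x ^ (1 - α) * Real.exp (-K * x ^ (-α))) (Ioi 0) :=
    hsub.congr_fun hsub_eq measurableSet_Ioi
  have hu'v : IntegrableOn (u' * v) (Ioi 0) := by
    have h5 : IntegrableOn (fun x : ℝ => -(K * α / 2) * (x ^ (1 - α) * Real.exp (-K * x ^ (-α))))
        (Ioi 0) := hsub'.const_mul (-(K * α / 2))
    refine h5.congr_fun (fun x hx => ?_) measurableSet_Ioi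
    have hx0 : (0:ℝ) < x := hx
    simp only [hu'_def, hv_def, Pi.mul_apply]
    have hx2 : x ^ (-α - 1) * x ^ (2:ℝ) = x ^ (1 - α) := by
      rw [← Real.rpow_add hx0]; ring_nf
    have : (x:ℝ) ^ 2 = x ^ (2:ℝ) := by
      rw [← Real.rpow_natCast x 2]; norm_num
    rw [this, ← hx2]
    ring
  -- limits at 0 and ∞
  have h_zero : Filter.Tendsto (u * v) (nhdsWithin 0 (Ioi 0)) (nhds 0) := by
    have hbound : Filter.Tendsto (fun x : ℝ => x ^ 2 / 2) (nhdsWithin 0 (Ioi 0)) (nhds 0) := by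
      have : Filter.Tendsto (fun x : ℝ => x ^ 2 / 2) (nhds 0) (nhds 0) := by
        have := ((continuous_pow 2).div_const (2:ℝ)).tendsto (0:ℝ)
        simpa using this
      exact this.mono_left nhdsWithin_le_nhds
    refine squeeze_zero' ?_ ?_ hbound
    · filter_upwards [self_mem_nhdsWithin] with x hx
      exact mul_nonneg (hu_nonneg x hx) (by positivity)
    · filter_upwards [self_mem_nhdsWithin] with x hx
      have h1 := hu_le_one x hx
      have : u x * v x ≤ 1 * v x :=
        mul_le_mul_of_nonneg_right h1 (by simp only [hv_def]; positivity)
      simpa [hv_def] using this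
  have h_infty : Filter.Tendsto (u * v) Filter.atTop (nhds 0) := by
    have hbound : Filter.Tendsto (fun x : ℝ => K / 2 * x ^ (2 - α)) Filter.atTop (nhds 0) := by
      have h1 : Filter.Tendsto (fun x : ℝ => x ^ (-(α - 2))) Filter.atTop (nhds 0) :=
        tendsto_rpow_neg_atTop (by linarith)
      have h2 := h1.const_mul (K / 2)
      simpa [show -(α - 2) = 2 - α by ring] using h2
    refine squeeze_zero' ?_ ?_ hbound
    · filter_upwards [Filter.eventually_gt_atTop 0] with x hx
      exact mul_nonneg (hu_nonneg x hx) (by simp only [hv_def]; positivity)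
    · filter_upwards [Filter.eventually_gt_atTop 0] with x hx
      have h1 := hu_le x hx
      have h2 : u x * v x ≤ (K * x ^ (-α)) * (x ^ 2 / 2) :=
        mul_le_mul_of_nonneg_right h1 (by simp only [hv_def]; positivity)
      refine h2.trans_eq ?_
      have hx2 : (x:ℝ) ^ 2 = x ^ (2:ℝ) := by
        rw [← Real.rpow_natCast x 2]; norm_num
      rw [hx2, show K * x ^ (-α) * (x ^ (2:ℝ) / 2) = K / 2 * (x ^ (-α) * x ^ (2:ℝ)) by ring,
        ← Real.rpow_add hx]
      ring_nf
  have hibp := integral_Ioi_mul_deriv_eq_deriv_mul hu hv huv' hu'v h_zero h_infty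
  -- LHS of IBP equals our integral
  have hLHS : ∫ x in Ioi (0:ℝ), u x * v' x = ∫ r in Ioi (0:ℝ), f r := by
    refine setIntegral_congr_fun measurableSet_Ioi (fun x _ => ?_)
    simp [hf, hu_def, hv'_def, mul_comm]
  -- compute ∫ u' v
  have hJ : ∫ x in Ioi (0:ℝ), x ^ (1 - α) * Real.exp (-K * x ^ (-α))
      = (1/α) * (K ^ (2/α - 1) * Real.Gamma (1 - 2/α)) := by
    have key := integral_comp_rpow_Ioi
      (fun y : ℝ => y ^ (-(2/α)) * Real.exp (-K * y)) (p := -α) (by linarith : (-α) ≠ 0)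
    have hL : ∫ x in Ioi (0:ℝ),
        (|(-α)| * x ^ ((-α) - 1)) • ((x ^ (-α)) ^ (-(2/α)) * Real.exp (-K * x ^ (-α)))
        = α * ∫ x in Ioi (0:ℝ), x ^ (1 - α) * Real.exp (-K * x ^ (-α)) := by
      rw [← integral_const_mul]
      refine setIntegral_congr_fun measurableSet_Ioi (fun x hx => ?_)
      have h6 := hsub_eq x hx
      rw [smul_eq_mul] at h6
      rw [smul_eq_mul, abs_of_neg (by linarith : (-α) < 0), neg_neg, mul_assoc, h6]
    have hR : ∫ y in Ioi (0:ℝ), y ^ (-(2/α)) * Real.exp (-K * y)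
        = K ^ (2/α - 1) * Real.Gamma (1 - 2/α) := by
      have := integral_rpow_mul_exp_neg_mul_rpow (p := 1) (q := -(2/α)) (b := K)
        zero_lt_one
        (by rw [neg_lt_neg_iff, div_lt_one hα0]; linarith) hK
      simp only [Real.rpow_one] at this
      rw [this]
      rw [show (-(-(2/α) + 1) / 1) = 2/α - 1 by ring, show (-(2/α) + 1) / 1 = 1 - 2/α by ring]
      ring
    rw [hL, hR] at key
    field_simp at key ⊢
    linarith [key]
  have hRHS : ∫ x in Ioi (0:ℝ), u' x * v x
      = -(K * α / 2) * ((1/α) * (K ^ (2/α - 1) * Real.Gamma (1 - 2/α))) := by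
    rw [← hJ, ← integral_const_mul]
    refine setIntegral_congr_fun measurableSet_Ioi (fun x hx => ?_)
    have hx0 : (0:ℝ) < x := hx
    simp only [hu'_def, hv_def]
    have hx2 : (x:ℝ) ^ 2 = x ^ (2:ℝ) := by
      rw [← Real.rpow_natCast x 2]; norm_num
    have hx3 : x ^ (-α - 1) * x ^ (2:ℝ) = x ^ (1 - α) := by
      rw [← Real.rpow_add hx0]; ring_nf
    rw [hx2, ← hx3]
    ring
  rw [hLHS, hRHS] at hibp
  rw [hibp]
  have hKpow : K * K ^ (2/α - 1) = K ^ (2/α) := by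
    have h7 : K ^ (2/α) = K ^ (1 + (2/α - 1)) := by norm_num
    rw [h7, Real.rpow_add hK, Real.rpow_one]
  rw [← hKpow]
  field_simp
  ring
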